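/- Let φ₁₂₃(x₁,x₂,x₃,t) = Σ x₁^s x₂^(w_k) x₃^(m_n − s − w_k) t^(n + m_n + k), the sum ranging over all gated Ferrers diagrams, and let ψ₁(x,t) = Σ x^(m_n) t^(n + m_n + k + w_k), the sum ranging over all wicketed Ferrers diagrams, both regarded as formal power series in t with coefficients in polynomial rings over ℚ. Then (1 − x t) · ψ₁(x,t) = t · φ₁₂₃(x, t·x, x, t) + t · ψ₁(x,t), where φ₁₂₃(x, t·x, x, t) denotes the series obtained by substituting x₁ = x, x₂ = t·x, x₃ = x. -/

import Mathlib

/-- A Ferrers diagram, encoded as its (nonempty) list of row lengths, bottom row first: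
positive entries, weakly increasing. -/
def IsFerrers (l : List ℕ) : Prop :=
  l ≠ [] ∧ l.Pairwise (· ≤ ·) ∧ ∀ x ∈ l, 0 < x

/-- The width of the top row, `m_n`. -/
def topWidth (l : List ℕ) : ℕ := l.getLastD 0

/-- 1-indexed access to the entries of a list (`row l i = m_i`). -/
def row (l : List ℕ) (i : ℕ) : ℕ := l.getD (i - 1) 0

/-- `IsGated l g s`: the Ferrers diagram `l = (m_1,…,m_n)` (with `n ≥ 2`) carries a gate
with widths `g = (w_1,…,w_k)` (`1 ≤ k ≤ n-1`, `w_1 ≤ … ≤ w_k` positive) at offset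
`s ≥ 1`, removing from row `n-k+j` the blocks in columns `s+1,…,s+w_j` for `j = 1,…,k`,
subject to `s + w_1 + 1 ≤ m_{n-k}`, `s + w_j + 1 ≤ m_{n-k+j}` for `j = 1,…,k`, and
`s + w_{j+1} + 1 ≤ m_{n-k+j}` for `j = 1,…,k-1`. -/
def IsGated (l g : List ℕ) (s : ℕ) : Prop :=
  IsFerrers l ∧ 2 ≤ l.length ∧
  g ≠ [] ∧ g.Pairwise (· ≤ ·) ∧ (∀ x ∈ g, 0 < x) ∧ g.length ≤ l.length - 1 ∧
  1 ≤ s ∧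
  s + row g 1 + 1 ≤ row l (l.length - g.length) ∧
  (∀ j, 1 ≤ j → j ≤ g.length → s + row g j + 1 ≤ row l (l.length - g.length + j)) ∧
  (∀ j, 1 ≤ j → j ≤ g.length - 1 → s + row g (j + 1) + 1 ≤ row l (l.length - g.length + j))

/-- Half-perimeter of a gated Ferrers diagram: `n + m_n + k`. -/
def gatedHP (l g : List ℕ) : ℕ := l.length + topWidth l + g.length

/-- `IsWicketed l g i₀ s`: the Ferrers diagram `l = (m_1,…,m_n)` carries a wicket with
widths `g = (w_1,…,w_k)` (`k ≥ 1`, `w_1 ≤ … ≤ w_k` positive) starting above row `i₀ ≥ 1`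
(with `i₀ + k ≤ n - 1`) at offset `s ≥ 1`, removing from row `i₀+j` the blocks in columns
`s+1,…,s+w_j` for `j = 1,…,k`, subject to `s + w_1 + 1 ≤ m_{i₀}`,
`s + w_j + 1 ≤ m_{i₀+j}` for `j = 1,…,k`, and `s + w_{j+1} + 1 ≤ m_{i₀+j}` for
`j = 1,…,k-1`. -/
def IsWicketed (l g : List ℕ) (i₀ s : ℕ) : Prop :=
  IsFerrers l ∧
  g ≠ [] ∧ g.Pairwise (· ≤ ·) ∧ (∀ x ∈ g, 0 < x) ∧
  1 ≤ i₀ ∧ i₀ + g.length ≤ l.length - 1 ∧ 1 ≤ s ∧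
  s + row g 1 + 1 ≤ row l i₀ ∧
  (∀ j, 1 ≤ j → j ≤ g.length → s + row g j + 1 ≤ row l (i₀ + j)) ∧
  (∀ j, 1 ≤ j → j ≤ g.length - 1 → s + row g (j + 1) + 1 ≤ row l (i₀ + j))

/-- Half-perimeter of a wicketed Ferrers diagram: `n + m_n + k + w_k`. -/
def wicketedHP (l g : List ℕ) : ℕ := l.length + topWidth l + g.length + topWidth g

/-- `φ₁₂₃(x, t·x, x, t) = Σ x^(m_n) t^(n + m_n + k + w_k)` over all gated Ferrers
diagrams: the series obtained from `φ₁₂₃(x₁,x₂,x₃,t)` by substituting `x₁ = x`,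
`x₂ = t·x`, `x₃ = x`. -/
noncomputable def phi123Sub : PowerSeries (Polynomial ℚ) :=
  PowerSeries.mk fun p =>
    ∑ m ∈ Finset.range (p + 1),
      (Nat.card {v : List ℕ × List ℕ × ℕ // IsGated v.1 v.2.1 v.2.2 ∧
          gatedHP v.1 v.2.1 + topWidth v.2.1 = p ∧ topWidth v.1 = m} : Polynomial ℚ) *
        Polynomial.X ^ m

/-- `ψ₁(x,t) = Σ x^(m_n) t^(n + m_n + k + w_k)` over all wicketed Ferrers diagrams. -/
noncomputable def psi1 : PowerSeries (Polynomial ℚ) :=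
  PowerSeries.mk fun p =>
    ∑ m ∈ Finset.range (p + 1),
      (Nat.card {v : List ℕ × List ℕ × ℕ × ℕ // IsWicketed v.1 v.2.1 v.2.2.1 v.2.2.2 ∧
          wicketedHP v.1 v.2.1 = p ∧ topWidth v.1 = m} : Polynomial ℚ) *
        Polynomial.X ^ m



lemma row_concat_low (l : List ℕ) (a i : ℕ) (h1 : 1 ≤ i) (h2 : i ≤ l.length) :
    row (l ++ [a]) i = row l i := by
  unfold row
  rw [List.getD_append l [a] 0 (i-1) (by omega)]

lemma row_concat_top (l : List ℕ) (a : ℕ) : row (l ++ [a]) (l.length + 1) = a := by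
  unfold row
  rw [List.getD_append_right l [a] 0 _ (by omega)]
  simp

lemma topWidth_concat (l : List ℕ) (a : ℕ) : topWidth (l ++ [a]) = a :=
  List.getLastD_concat

lemma row_dropLast (l : List ℕ) (i : ℕ) (h1 : 1 ≤ i) (h2 : i ≤ l.length - 1) :
    row l.dropLast i = row l i := by
  unfold row
  have hlen : l.dropLast.length = l.length - 1 := List.length_dropLast
  rw [List.getD_eq_getElem _ 0 (by omega), List.getD_eq_getElem _ 0 (by omega),
    List.getElem_dropLast]

lemma topWidth_eq_row (l : List ℕ) (h : l ≠ []) : topWidth l = row l l.length := by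
  conv_lhs => rw [← List.dropLast_append_getLast h]
  rw [topWidth_concat]
  unfold row
  rw [List.getD_eq_getElem _ 0 (by simp; exact List.length_pos_iff.mpr h)]
  exact List.getLast_eq_getElem h

lemma row_mono (l : List ℕ) (hs : l.Pairwise (· ≤ ·)) (i j : ℕ) (h1 : 1 ≤ i) (h2 : i ≤ j)
    (h3 : j ≤ l.length) : row l i ≤ row l j := by
  rcases eq_or_lt_of_le h2 with rfl | hlt
  · exact le_rfl
  unfold row
  rw [List.getD_eq_getElem _ 0 (by omega), List.getD_eq_getElem _ 0 (by omega)]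
  exact List.pairwise_iff_getElem.mp hs _ _ _ (by omega) (by omega)

lemma le_topWidth_of_mem (l : List ℕ) (hs : l.Pairwise (· ≤ ·)) {x : ℕ} (hx : x ∈ l) :
    x ≤ topWidth l := by
  have hne : l ≠ [] := List.ne_nil_of_mem hx
  obtain ⟨i, hi, rfl⟩ := List.getElem_of_mem hx
  rw [topWidth_eq_row l hne]
  have : l[i] = row l (i+1) := by unfold row; rw [List.getD_eq_getElem _ 0 (by omega)]; simp
  rw [this]
  exact row_mono l hs _ _ (by omega) (by omega) (by omega)

lemma topWidth_pos (l : List ℕ) (hF : IsFerrers l) : 1 ≤ topWidth l := by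
  obtain ⟨hne, _, hpos⟩ := hF
  have := hpos _ (List.getLast_mem hne)
  have h2 : topWidth l = l.getLast hne := by
    conv_lhs => rw [← List.dropLast_append_getLast hne, topWidth_concat]
  omega

lemma row_mem (l : List ℕ) (i : ℕ) (h1 : 1 ≤ i) (h2 : i ≤ l.length) : row l i ∈ l := by
  unfold row
  rw [List.getD_eq_getElem _ 0 (by omega)]
  exact List.getElem_mem _



abbrev WT := List ℕ × List ℕ × ℕ × ℕ
abbrev GT := List ℕ × List ℕ × ℕ

def Wc (p m : ℕ) (v : WT) : Prop :=
  IsWicketed v.1 v.2.1 v.2.2.1 v.2.2.2 ∧ wicketedHP v.1 v.2.1 = p ∧ topWidth v.1 = m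
def Gc (p m : ℕ) (u : GT) : Prop :=
  IsGated u.1 u.2.1 u.2.2 ∧ gatedHP u.1 u.2.1 + topWidth u.2.1 = p ∧ topWidth u.1 = m

noncomputable def NW (p m : ℕ) : ℕ := Nat.card {v : WT // Wc p m v}
noncomputable def NG (p m : ℕ) : ℕ := Nat.card {u : GT // Gc p m u}

lemma NW_eq (p m : ℕ) : NW p m =
    Nat.card {v : List ℕ × List ℕ × ℕ × ℕ // IsWicketed v.1 v.2.1 v.2.2.1 v.2.2.2 ∧
      wicketedHP v.1 v.2.1 = p ∧ topWidth v.1 = m} := rfl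
lemma NG_eq (p m : ℕ) : NG p m =
    Nat.card {v : List ℕ × List ℕ × ℕ // IsGated v.1 v.2.1 v.2.2 ∧
      gatedHP v.1 v.2.1 + topWidth v.2.1 = p ∧ topWidth v.1 = m} := rfl

lemma topWidth_eq_getLast (l : List ℕ) (h : l ≠ []) : topWidth l = l.getLast h := by
  conv_lhs => rw [← List.dropLast_append_getLast h]
  rw [topWidth_concat]

/-- basic numeric facts from a wicket -/
lemma wick_n3 {l g : List ℕ} {i₀ s : ℕ} (h : IsWicketed l g i₀ s) :
    1 ≤ g.length ∧ 3 ≤ l.length := by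
  obtain ⟨⟨hne, -, -⟩, hgne, -, -, hi1, hik, -⟩ := h
  have hk : 1 ≤ g.length := List.length_pos_iff.mpr hgne
  have hl : 1 ≤ l.length := List.length_pos_iff.mpr hne
  exact ⟨hk, by omega⟩

lemma NW_zero_left (p : ℕ) : NW p 0 = 0 := by
  have : IsEmpty {v : WT // Wc p 0 v} := by
    constructor; rintro ⟨v, hw, -, htop⟩
    have := topWidth_pos v.1 hw.1
    omega
  exact Nat.card_of_isEmpty

lemma NG_zero_left (p : ℕ) : NG p 0 = 0 := by
  have : IsEmpty {u : GT // Gc p 0 u} := by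
    constructor; rintro ⟨u, hg, -, htop⟩
    have := topWidth_pos u.1 hg.1
    omega
  exact Nat.card_of_isEmpty

lemma NW_zero_big {p m : ℕ} (h : p < m) : NW p m = 0 := by
  have : IsEmpty {v : WT // Wc p m v} := by
    constructor; rintro ⟨v, hw, hhp, htop⟩
    unfold wicketedHP at hhp
    omega
  exact Nat.card_of_isEmpty

lemma NG_zero_big {p m : ℕ} (h : p < m) : NG p m = 0 := by
  have : IsEmpty {u : GT // Gc p m u} := by
    constructor; rintro ⟨u, hg, hhp, htop⟩
    unfold gatedHP at hhp
    omega
  exact Nat.card_of_isEmpty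



lemma finite_bdd (L B : ℕ) : {l : List ℕ | l.length ≤ L ∧ ∀ x ∈ l, x ≤ B}.Finite := by
  induction L with
  | zero =>
    apply Set.Finite.subset (Set.finite_singleton ([] : List ℕ))
    rintro l ⟨h1, -⟩
    simp [List.length_eq_zero_iff.mp (Nat.le_zero.mp h1)]
  | succ L ih =>
    apply Set.Finite.subset
      ((((Set.finite_Icc 0 B).prod ih).image (fun p => p.1 :: p.2)).insert [])
    rintro l ⟨h1, h2⟩
    cases l with
    | nil => exact Set.mem_insert _ _
    | cons a t =>
      refine Set.mem_insert_of_mem _ ⟨(a, t), ⟨⟨Nat.zero_le _, h2 a (List.mem_cons_self)⟩,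
        ⟨by simpa using h1, fun x hx => h2 x (List.mem_cons_of_mem _ hx)⟩⟩, rfl⟩

lemma finiteW (p m : ℕ) : Finite {v : WT // Wc p m v} := by
  have hfin : {v : WT | Wc p m v}.Finite := by
    apply Set.Finite.subset ((finite_bdd p p).prod ((finite_bdd p p).prod
      ((Set.finite_Icc 0 p).prod (Set.finite_Icc 0 p))))
    rintro ⟨l, g, i₀, s⟩ ⟨hw, hhp, htop⟩
    dsimp only at hw hhp htop
    simp only [Set.mem_prod, Set.mem_setOf_eq, Set.mem_Icc]
    obtain ⟨hk, hn3⟩ := wick_n3 hw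
    obtain ⟨⟨hne, hsort, -⟩, hgne, hgsort, -, hi1, hik, hs1, hc1, -⟩ := hw
    unfold wicketedHP at hhp
    have hltw : topWidth l ≤ p := by omega
    have hgtw : topWidth g ≤ p := by omega
    have hrowi : row l i₀ ≤ topWidth l := by
      rw [topWidth_eq_row l hne]
      exact row_mono l hsort i₀ l.length hi1 (by omega) le_rfl
    refine ⟨⟨by omega, fun x hx => (le_topWidth_of_mem l hsort hx).trans hltw⟩,
      ⟨by omega, fun x hx => (le_topWidth_of_mem g hgsort hx).trans hgtw⟩,
      ⟨Nat.zero_le _, by omega⟩, ⟨Nat.zero_le _, by omega⟩⟩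
  exact hfin.to_subtype

lemma finiteG (p m : ℕ) : Finite {u : GT // Gc p m u} := by
  have hfin : {u : GT | Gc p m u}.Finite := by
    apply Set.Finite.subset ((finite_bdd p p).prod ((finite_bdd p p).prod
      (Set.finite_Icc 0 p)))
    rintro ⟨l, g, s⟩ ⟨hg, hhp, htop⟩
    dsimp only at hg hhp htop
    simp only [Set.mem_prod, Set.mem_setOf_eq, Set.mem_Icc]
    obtain ⟨⟨hne, hsort, -⟩, hn2, hgne, hgsort, -, hkn, hs1, hc1, -⟩ := hg
    unfold gatedHP at hhp
    have hltw : topWidth l ≤ p := by omega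
    have hgtw : topWidth g ≤ p := by omega
    have hk : 1 ≤ g.length := List.length_pos_iff.mpr hgne
    have hrow : row l (l.length - g.length) ≤ topWidth l := by
      rw [topWidth_eq_row l hne]
      exact row_mono l hsort _ l.length (by omega) (by omega) le_rfl
    refine ⟨⟨by omega, fun x hx => (le_topWidth_of_mem l hsort hx).trans hltw⟩,
      ⟨by omega, fun x hx => (le_topWidth_of_mem g hgsort hx).trans hgtw⟩,
      ⟨Nat.zero_le _, by omega⟩⟩
  exact hfin.to_subtype

lemma card_split {α : Type*} (D P : α → Prop) (h : Finite {v // D v}) :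
    Nat.card {v // D v} = Nat.card {v // D v ∧ P v} + Nat.card {v // D v ∧ ¬ P v} := by
  classical
  have h1 : Finite {v // D v ∧ P v} := Finite.of_injective
    (fun x => (⟨x.1, x.2.1⟩ : {v // D v}))
    (by intro a b hab; simp only [Subtype.mk.injEq] at hab; exact Subtype.ext hab)
  have h2 : Finite {v // D v ∧ ¬ P v} := Finite.of_injective
    (fun x => (⟨x.1, x.2.1⟩ : {v // D v}))
    (by intro a b hab; simp only [Subtype.mk.injEq] at hab; exact Subtype.ext hab)
  rw [← Nat.card_sum]
  apply Nat.card_congr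
  refine { toFun := fun x => if hp : P x.1 then Sum.inl ⟨x.1, x.2, hp⟩ else Sum.inr ⟨x.1, x.2, hp⟩,
           invFun := Sum.elim (fun x => ⟨x.1, x.2.1⟩) (fun x => ⟨x.1, x.2.1⟩),
           left_inv := fun x => by by_cases hp : P x.1 <;> simp [hp],
           right_inv := ?_ }
  rintro (⟨x, hx⟩ | ⟨x, hx⟩) <;> simp [hx.2]



def P1 (v : WT) : Prop := row v.1 (v.1.length - 1) < row v.1 v.1.length
def P2 (v : WT) : Prop := v.2.2.1 + v.2.1.length + 1 = v.1.length

lemma row_setTop (l : List ℕ) (a i : ℕ) (h1 : 1 ≤ i) (h2 : i ≤ l.length - 1) :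
    row (l.dropLast ++ [a]) i = row l i := by
  rw [row_concat_low _ _ _ h1 (by rw [List.length_dropLast]; omega),
    row_dropLast _ _ h1 h2]

lemma row_setTop_top (l : List ℕ) (a : ℕ) (h : l ≠ []) :
    row (l.dropLast ++ [a]) l.length = a := by
  have hl : 1 ≤ l.length := List.length_pos_iff.mpr h
  have hidx : l.dropLast.length + 1 = l.length := by rw [List.length_dropLast]; omega
  rw [← hidx]; exact row_concat_top _ _

lemma dropLast_append_top {l : List ℕ} (hne : l ≠ []) : l.dropLast ++ [topWidth l] = l := by
  rw [topWidth_eq_getLast l hne]; exact List.dropLast_append_getLast hne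

lemma topWidth_dropLast_eq {l : List ℕ} (hsort : l.Pairwise (· ≤ ·)) (hn2 : 2 ≤ l.length)
    (hnp : ¬ row l (l.length - 1) < row l l.length) : topWidth l.dropLast = topWidth l := by
  have hne : l ≠ [] := by intro hcon; subst hcon; simp at hn2
  have hdne : l.dropLast ≠ [] := by
    intro hcon; have := congrArg List.length hcon
    simp [List.length_dropLast] at this; omega
  have hmono := row_mono l hsort (l.length - 1) l.length (by omega) (by omega) le_rfl
  have heq : row l (l.length - 1) = row l l.length := by omega
  rw [topWidth_eq_row _ hdne, List.length_dropLast,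
    row_dropLast l _ (by omega) (by omega), heq, ← topWidth_eq_row _ hne]

lemma setTop_wick {l g : List ℕ} {i₀ s : ℕ} (h : IsWicketed l g i₀ s) {a : ℕ}
    (ha : row l (l.length - 1) ≤ a) : IsWicketed (l.dropLast ++ [a]) g i₀ s := by
  obtain ⟨hk, hn3⟩ := wick_n3 h
  obtain ⟨⟨hne, hsort, hpos⟩, hgne, hgsort, hgpos, hi1, hik, hs1, hc1, hc2, hc3⟩ := h
  have hlen : (l.dropLast ++ [a]).length = l.length := by
    simp [List.length_dropLast]; omega
  have h2r : 2 ≤ row l (l.length - 1) := by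
    have hri : 2 ≤ row l i₀ := by omega
    have := row_mono l hsort i₀ (l.length - 1) hi1 (by omega) (by omega)
    omega
  have hdne : l.dropLast ≠ [] := by
    intro hcon; have := congrArg List.length hcon
    simp [List.length_dropLast] at this; omega
  have hdsort : l.dropLast.Pairwise (· ≤ ·) := hsort.sublist (List.dropLast_sublist l)
  have hdtop : topWidth l.dropLast = row l (l.length - 1) := by
    rw [topWidth_eq_row _ hdne, List.length_dropLast, row_dropLast l _ (by omega) (by omega)]
  refine ⟨⟨by simp, ?_, ?_⟩, hgne, hgsort, hgpos, hi1, by rw [hlen]; exact hik, hs1, ?_, ?_, ?_⟩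
  · apply List.pairwise_append.mpr
    refine ⟨hdsort, by simp, ?_⟩
    intro x hx y hy
    simp only [List.mem_singleton] at hy; subst hy
    exact (le_topWidth_of_mem _ hdsort hx).trans (by omega)
  · intro x hx
    rcases List.mem_append.mp hx with hx | hx
    · exact hpos x (List.mem_of_mem_dropLast hx)
    · simp only [List.mem_singleton] at hx; omega
  · rw [row_setTop l a i₀ hi1 (by omega)]; exact hc1
  · intro j hj1 hj2
    rw [row_setTop l a (i₀ + j) (by omega) (by omega)]; exact hc2 j hj1 hj2
  · intro j hj1 hj2
    rw [row_setTop l a (i₀ + j) (by omega) (by omega)]; exact hc3 j hj1 hj2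

lemma ferrers_concat_top {l : List ℕ} (h : IsFerrers l) : IsFerrers (l ++ [topWidth l]) := by
  obtain ⟨hne, hsort, hpos⟩ := h
  refine ⟨by simp, ?_, ?_⟩
  · apply List.pairwise_append.mpr
    refine ⟨hsort, by simp, ?_⟩
    intro x hx y hy
    simp only [List.mem_singleton] at hy; subst hy
    exact le_topWidth_of_mem _ hsort hx
  · intro x hx
    rcases List.mem_append.mp hx with hx | hx
    · exact hpos x hx
    · simp only [List.mem_singleton] at hx; subst hx
      exact topWidth_pos l ⟨hne, hsort, hpos⟩

lemma app_wick {l g : List ℕ} {i₀ s : ℕ} (h : IsWicketed l g i₀ s) :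
    IsWicketed (l ++ [topWidth l]) g i₀ s := by
  obtain ⟨hk, hn3⟩ := wick_n3 h
  obtain ⟨hF, hgne, hgsort, hgpos, hi1, hik, hs1, hc1, hc2, hc3⟩ := h
  refine ⟨ferrers_concat_top hF, hgne, hgsort, hgpos, hi1, by simp; omega, hs1, ?_, ?_, ?_⟩
  · rw [row_concat_low _ _ _ hi1 (by omega)]; exact hc1
  · intro j hj1 hj2
    rw [row_concat_low _ _ _ (by omega) (by omega)]; exact hc2 j hj1 hj2
  · intro j hj1 hj2
    rw [row_concat_low _ _ _ (by omega) (by omega)]; exact hc3 j hj1 hj2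

lemma chop_wick {l g : List ℕ} {i₀ s : ℕ} (h : IsWicketed l g i₀ s)
    (hik2 : i₀ + g.length ≤ l.length - 2) : IsWicketed l.dropLast g i₀ s := by
  obtain ⟨hk, hn3⟩ := wick_n3 h
  obtain ⟨⟨hne, hsort, hpos⟩, hgne, hgsort, hgpos, hi1, hik, hs1, hc1, hc2, hc3⟩ := h
  have hdne : l.dropLast ≠ [] := by
    intro hcon; have := congrArg List.length hcon
    simp [List.length_dropLast] at this; omega
  refine ⟨⟨hdne, hsort.sublist (List.dropLast_sublist l),
    fun x hx => hpos x (List.mem_of_mem_dropLast hx)⟩, hgne, hgsort, hgpos, hi1,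
    by rw [List.length_dropLast]; omega, hs1, ?_, ?_, ?_⟩
  · rw [row_dropLast l i₀ hi1 (by omega)]; exact hc1
  · intro j hj1 hj2
    rw [row_dropLast l _ (by omega) (by omega)]; exact hc2 j hj1 hj2
  · intro j hj1 hj2
    rw [row_dropLast l _ (by omega) (by omega)]; exact hc3 j hj1 hj2




lemma card_EC (q m : ℕ) :
    Nat.card {v : WT // Wc (q+1) (m+1) v ∧ P1 v} = Nat.card {v : WT // Wc q m v} := by
  apply Nat.card_congr
  refine { toFun := fun x => ⟨(x.1.1.dropLast ++ [m], x.1.2), ?_⟩,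
           invFun := fun u => ⟨(u.1.1.dropLast ++ [m+1], u.1.2), ?_⟩,
           left_inv := ?_, right_inv := ?_ }
  · obtain ⟨⟨l, g, i₀, s⟩, ⟨hw, hhp, htop⟩, hp1⟩ := x
    dsimp only at hw hhp htop hp1 ⊢
    obtain ⟨hk, hn3⟩ := wick_n3 hw
    have hne : l ≠ [] := hw.1.1
    unfold P1 at hp1; dsimp only at hp1
    have hrn : row l l.length = m + 1 := by rw [← topWidth_eq_row l hne, htop]
    have ha : row l (l.length - 1) ≤ m := by omega
    have hlen : (l.dropLast ++ [m]).length = l.length := by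
      simp [List.length_dropLast]; omega
    refine ⟨setTop_wick hw ha, ?_, topWidth_concat _ _⟩
    unfold wicketedHP at hhp ⊢
    dsimp only
    rw [hlen, topWidth_concat]
    omega
  · obtain ⟨⟨l, g, i₀, s⟩, hw, hhp, htop⟩ := u
    dsimp only at hw hhp htop ⊢
    obtain ⟨hk, hn3⟩ := wick_n3 hw
    have hne : l ≠ [] := hw.1.1
    have hrn : row l l.length = m := by rw [← topWidth_eq_row l hne, htop]
    have hmono := row_mono l hw.1.2.1 (l.length - 1) l.length (by omega) (by omega) le_rfl
    have ha : row l (l.length - 1) ≤ m + 1 := by omega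
    have hlen : (l.dropLast ++ [m+1]).length = l.length := by
      simp [List.length_dropLast]; omega
    refine ⟨⟨setTop_wick hw ha, ?_, topWidth_concat _ _⟩, ?_⟩
    · unfold wicketedHP at hhp ⊢
      dsimp only
      rw [hlen, topWidth_concat]
      omega
    · unfold P1
      dsimp only
      rw [hlen, row_setTop_top l (m+1) hne, row_setTop l (m+1) (l.length - 1) (by omega) le_rfl]
      omega
  · rintro ⟨⟨l, g, i₀, s⟩, ⟨hw, hhp, htop⟩, hp1⟩
    apply Subtype.ext
    dsimp only
    rw [List.dropLast_concat, ← htop, dropLast_append_top hw.1.1]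
  · rintro ⟨⟨l, g, i₀, s⟩, hw, hhp, htop⟩
    apply Subtype.ext
    dsimp only
    rw [List.dropLast_concat, ← htop, dropLast_append_top hw.1.1]



lemma card_EB (q m : ℕ) :
    Nat.card {v : WT // (Wc (q+1) m v ∧ ¬ P1 v) ∧ ¬ P2 v} =
      Nat.card {v : WT // Wc q m v} := by
  apply Nat.card_congr
  refine { toFun := fun x => ⟨(x.1.1.dropLast, x.1.2), ?_⟩,
           invFun := fun u => ⟨(u.1.1 ++ [m], u.1.2), ?_⟩,
           left_inv := ?_, right_inv := ?_ }
  · obtain ⟨⟨l, g, i₀, s⟩, ⟨⟨hw, hhp, htop⟩, hnp1⟩, hnp2⟩ := x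
    dsimp only at hw hhp htop hnp1 hnp2 ⊢
    obtain ⟨hk, hn3⟩ := wick_n3 hw
    have hne : l ≠ [] := hw.1.1
    unfold P1 at hnp1; unfold P2 at hnp2; dsimp only at hnp1 hnp2
    have hik := hw.2.2.2.2.2.1
    have hik2 : i₀ + g.length ≤ l.length - 2 := by omega
    have hdtop : topWidth l.dropLast = topWidth l :=
      topWidth_dropLast_eq hw.1.2.1 (by omega) hnp1
    refine ⟨chop_wick hw hik2, ?_, by rw [hdtop]; exact htop⟩
    unfold wicketedHP at hhp ⊢
    dsimp only
    rw [hdtop, List.length_dropLast]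
    omega
  · obtain ⟨⟨l, g, i₀, s⟩, hw, hhp, htop⟩ := u
    dsimp only at hw hhp htop ⊢
    obtain ⟨hk, hn3⟩ := wick_n3 hw
    have hne : l ≠ [] := hw.1.1
    have hw2 : IsWicketed (l ++ [m]) g i₀ s := by
      have := app_wick hw; rwa [htop] at this
    have hik := hw.2.2.2.2.2.1
    have hrlow : row (l ++ [m]) l.length = m := by
      rw [row_concat_low _ _ _ (by omega) le_rfl, ← topWidth_eq_row l hne, htop]
    have hrtop : row (l ++ [m]) (l.length + 1) = m := row_concat_top _ _
    refine ⟨⟨⟨hw2, ?_, topWidth_concat _ _⟩, ?_⟩, ?_⟩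
    · unfold wicketedHP at hhp ⊢
      dsimp only
      rw [topWidth_concat]
      simp only [List.length_append, List.length_cons, List.length_nil]
      omega
    · unfold P1
      dsimp only
      simp only [List.length_append, List.length_cons, List.length_nil]
      have h1 : l.length + 1 - 1 = l.length := by omega
      rw [h1, hrtop, hrlow]
      omega
    · unfold P2
      dsimp only
      simp only [List.length_append, List.length_cons, List.length_nil]
      omega
  · rintro ⟨⟨l, g, i₀, s⟩, ⟨⟨hw, hhp, htop⟩, hnp1⟩, hnp2⟩
    apply Subtype.ext
    show (l.dropLast ++ [m], g, i₀, s) = (l, g, i₀, s)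
    rw [← htop, dropLast_append_top hw.1.1]
  · rintro ⟨⟨l, g, i₀, s⟩, hw, hhp, htop⟩
    apply Subtype.ext
    show ((l ++ [m]).dropLast, g, i₀, s) = (l, g, i₀, s)
    rw [List.dropLast_concat]



lemma card_EA (q m : ℕ) :
    Nat.card {v : WT // (Wc (q+1) m v ∧ ¬ P1 v) ∧ P2 v} =
      Nat.card {u : GT // Gc q m u} := by
  apply Nat.card_congr
  refine { toFun := fun x => ⟨(x.1.1.dropLast, x.1.2.1, x.1.2.2.2), ?_⟩,
           invFun := fun u => ⟨(u.1.1 ++ [m], u.1.2.1, u.1.1.length - u.1.2.1.length, u.1.2.2), ?_⟩,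
           left_inv := ?_, right_inv := ?_ }
  · obtain ⟨⟨l, g, i₀, s⟩, ⟨⟨hw, hhp, htop⟩, hnp1⟩, hp2⟩ := x
    dsimp only at hw hhp htop hnp1 hp2 ⊢
    obtain ⟨hk, hn3⟩ := wick_n3 hw
    unfold P1 at hnp1; unfold P2 at hp2; dsimp only at hnp1 hp2
    unfold wicketedHP at hhp
    obtain ⟨⟨hne, hsort, hpos⟩, hgne, hgsort, hgpos, hi1, hik, hs1, hc1, hc2, hc3⟩ := hw
    have hdne : l.dropLast ≠ [] := by
      intro hcon; have := congrArg List.length hcon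
      simp [List.length_dropLast] at this; omega
    have hdtop : topWidth l.dropLast = topWidth l :=
      topWidth_dropLast_eq hsort (by omega) hnp1
    have hidx : l.dropLast.length - g.length = i₀ := by
      rw [List.length_dropLast]; omega
    show Gc q m (l.dropLast, g, s)
    unfold Gc IsGated gatedHP
    dsimp only
    have hidx2 : l.length - 1 - g.length = i₀ := by omega
    simp only [List.length_dropLast]
    rw [hidx2, hdtop]
    refine ⟨⟨⟨hdne, hsort.sublist (List.dropLast_sublist l),
      fun x hx => hpos x (List.mem_of_mem_dropLast hx)⟩,
      by omega, hgne, hgsort, hgpos, by omega, hs1, ?_, ?_, ?_⟩, by omega, htop⟩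
    · rw [row_dropLast l i₀ hi1 (by omega)]; exact hc1
    · intro j hj1 hj2
      rw [row_dropLast l _ (by omega) (by omega)]; exact hc2 j hj1 hj2
    · intro j hj1 hj2
      rw [row_dropLast l _ (by omega) (by omega)]; exact hc3 j hj1 hj2
  · obtain ⟨⟨l, g, s⟩, hg, hhp, htop⟩ := u
    dsimp only at hg hhp htop ⊢
    obtain ⟨⟨hne, hsort, hpos⟩, hn2, hgne, hgsort, hgpos, hkn, hs1, hc1, hc2, hc3⟩ := hg
    unfold gatedHP at hhp
    have hk : 1 ≤ g.length := List.length_pos_iff.mpr hgne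
    have hF2 : IsFerrers (l ++ [m]) := by
      have := ferrers_concat_top ⟨hne, hsort, hpos⟩; rwa [htop] at this
    have hrlow : row (l ++ [m]) l.length = m := by
      rw [row_concat_low _ _ _ (by omega) le_rfl, ← topWidth_eq_row l hne, htop]
    have hrtop : row (l ++ [m]) (l.length + 1) = m := row_concat_top _ _
    show (Wc (q+1) m (l ++ [m], g, l.length - g.length, s) ∧
        ¬ P1 (l ++ [m], g, l.length - g.length, s)) ∧ P2 (l ++ [m], g, l.length - g.length, s)
    unfold Wc IsWicketed wicketedHP P1 P2
    dsimp only
    rw [topWidth_concat]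
    simp only [List.length_append, List.length_cons, List.length_nil]
    have h1 : l.length + 1 - 1 = l.length := by omega
    rw [h1, hrtop, hrlow]
    refine ⟨⟨⟨⟨hF2, hgne, hgsort, hgpos, by omega, by omega, hs1, ?_, ?_, ?_⟩,
      by omega, trivial⟩, by omega⟩, by omega⟩
    · rw [row_concat_low _ _ _ (by omega) (by omega)]; exact hc1
    · intro j hj1 hj2
      rw [row_concat_low _ _ _ (by omega) (by omega)]; exact hc2 j hj1 hj2
    · intro j hj1 hj2
      rw [row_concat_low _ _ _ (by omega) (by omega)]; exact hc3 j hj1 hj2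
  · rintro ⟨⟨l, g, i₀, s⟩, ⟨⟨hw, hhp, htop⟩, hnp1⟩, hp2⟩
    apply Subtype.ext
    unfold P2 at hp2; dsimp only at hp2
    obtain ⟨hk, hn3⟩ := wick_n3 hw
    show (l.dropLast ++ [m], g, l.dropLast.length - g.length, s) = (l, g, i₀, s)
    have h1 : l.dropLast ++ [m] = l := by rw [← htop]; exact dropLast_append_top hw.1.1
    have h2 : l.dropLast.length - g.length = i₀ := by rw [List.length_dropLast]; omega
    rw [h1, h2]
  · rintro ⟨⟨l, g, s⟩, hg, hhp, htop⟩
    apply Subtype.ext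
    show ((l ++ [m]).dropLast, g, s) = (l, g, s)
    rw [List.dropLast_concat]



lemma finite_sub {α : Type*} (D Q : α → Prop) (h : Finite {v // D v}) :
    Finite {v // D v ∧ Q v} :=
  Finite.of_injective (fun x => (⟨x.1, x.2.1⟩ : {v // D v}))
    (by intro a b hab; simp only [Subtype.mk.injEq] at hab; exact Subtype.ext hab)

lemma master (q m : ℕ) : NW (q+1) (m+1) = NG q (m+1) + NW q (m+1) + NW q m := by
  have h1 := card_split (Wc (q+1) (m+1)) P1 (finiteW (q+1) (m+1))
  have h2 := card_split (fun v => Wc (q+1) (m+1) v ∧ ¬ P1 v) P2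
    (finite_sub _ _ (finiteW (q+1) (m+1)))
  have hC := card_EC q m
  have hA := card_EA q (m+1)
  have hB := card_EB q (m+1)
  unfold NW NG
  rw [h1, h2, hC, hA, hB]
  omega




lemma coeff_psi1 (p : ℕ) : PowerSeries.coeff p psi1
    = ∑ m ∈ Finset.range (p+1), (NW p m : Polynomial ℚ) * Polynomial.X ^ m :=
  PowerSeries.coeff_mk _ _

lemma coeff_phi (p : ℕ) : PowerSeries.coeff p phi123Sub
    = ∑ m ∈ Finset.range (p+1), (NG p m : Polynomial ℚ) * Polynomial.X ^ m :=
  PowerSeries.coeff_mk _ _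

lemma shift_sum (c : ℕ → ℕ) (q : ℕ) (h0 : c 0 = 0) (htop : c (q+1) = 0) :
    ∑ i ∈ Finset.range (q+1), (c (i+1) : Polynomial ℚ) * Polynomial.X ^ (i+1)
      = ∑ m ∈ Finset.range (q+1), (c m : Polynomial ℚ) * Polynomial.X ^ m := by
  have e1 := Finset.sum_range_succ' (fun m => (c m : Polynomial ℚ) * Polynomial.X ^ m) (q+1)
  have e2 := Finset.sum_range_succ (fun m => (c m : Polynomial ℚ) * Polynomial.X ^ m) (q+1)
  simp only [h0, htop, Nat.cast_zero, zero_mul, add_zero] at e1 e2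
  linear_combination e2 - e1



open PowerSeries in
/-- The umbral evolution equation `ψ₁ = U₃(φ₁₂₃) + U₀(ψ₁)` for wicketed Ferrers
diagrams, cleared of the denominator `1 - x t`:
`(1 - x t) ψ₁(x,t) = t φ₁₂₃(x, t x, x, t) + t ψ₁(x,t)`. -/
theorem wicketed_umbral_equation :
    let t : PowerSeries (Polynomial ℚ) := PowerSeries.X
    let x : PowerSeries (Polynomial ℚ) := PowerSeries.C Polynomial.X
    (1 - x * t) * psi1 = t * phi123Sub + t * psi1 := by
  intro t x
  show (1 - PowerSeries.C Polynomial.X * PowerSeries.X) * psi1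
      = PowerSeries.X * phi123Sub + PowerSeries.X * psi1
  apply PowerSeries.ext
  intro p
  rw [show (1 - PowerSeries.C Polynomial.X * PowerSeries.X) * psi1
      = psi1 - PowerSeries.C Polynomial.X * (PowerSeries.X * psi1) by ring]
  rw [map_sub, map_add, PowerSeries.coeff_C_mul]
  cases p with
  | zero =>
    simp [coeff_psi1, NW_zero_left]
  | succ q =>
    simp only [PowerSeries.coeff_succ_X_mul]
    rw [coeff_psi1, coeff_psi1, coeff_phi]
    have key : ∑ m ∈ Finset.range (q+1+1), (NW (q+1) m : Polynomial ℚ) * Polynomial.X ^ m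
        = ∑ m ∈ Finset.range (q+1), (NG q m : Polynomial ℚ) * Polynomial.X ^ m
          + ∑ m ∈ Finset.range (q+1), (NW q m : Polynomial ℚ) * Polynomial.X ^ m
          + (∑ m ∈ Finset.range (q+1), (NW q m : Polynomial ℚ) * Polynomial.X ^ m)
            * Polynomial.X := by
      rw [Finset.sum_range_succ' (fun m => (NW (q+1) m : Polynomial ℚ) * Polynomial.X ^ m) (q+1)]
      simp only [NW_zero_left, Nat.cast_zero, zero_mul, add_zero]
      have hmain : ∀ i ∈ Finset.range (q+1),
          (NW (q+1) (i+1) : Polynomial ℚ) * Polynomial.X ^ (i+1)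
            = (NG q (i+1) : Polynomial ℚ) * Polynomial.X ^ (i+1)
              + (NW q (i+1) : Polynomial ℚ) * Polynomial.X ^ (i+1)
              + ((NW q i : Polynomial ℚ) * Polynomial.X ^ i) * Polynomial.X := by
        intro i _
        rw [master]
        push_cast
        ring
      rw [Finset.sum_congr rfl hmain, Finset.sum_add_distrib, Finset.sum_add_distrib,
        shift_sum (NG q) q (NG_zero_left q) (NG_zero_big (lt_add_one q)),
        shift_sum (NW q) q (NW_zero_left q) (NW_zero_big (lt_add_one q)),
        ← Finset.sum_mul]
    rw [key]
    ring
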